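/- arXiv:2003.06130 — 2 statements merged into one kernel-verified Lean document; each statement's English description precedes it below -/
import Mathlib

section
/- Let Φ be a measurable functional calculus on (X, Σ) and let f, g : X → 𝕜 be measurable. (a) If |f| ≤ |g| pointwise, then dom(Φ(g)) ⊆ dom(Φ(f)) and ‖Φ(f)x‖ ≤ ‖Φ(g)x‖ for all x ∈ dom(Φ(g)). (c) If p(z) = Σ_{j=0}^{n} a_j z^j is a polynomial of degree n ≥ 1 over 𝕜, then Φ(p ∘ f) = Σ_{j=0}^{n} a_j Φ(f)^j (equality of partially defined operators); in particular dom(Φ(p ∘ f)) = dom(Φ(f)^n). -/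
open scoped Topology

noncomputable section

/-- Composition `S ∘ T` of partially defined linear operators, with domain
`{x ∈ dom T | T x ∈ dom S}`. -/
noncomputable def LinearPMap.compP {R E : Type*} [Ring R] [AddCommGroup E] [Module R E]
    (S T : E →ₗ.[R] E) : E →ₗ.[R] E where
  domain := (S.domain.comap T.toFun).map T.domain.subtype
  toFun := S.toFun.comp <| LinearMap.codRestrict S.domain
      (T.toFun.comp (Submodule.inclusion (Submodule.map_subtype_le _ _)))
      (fun x => by
        obtain ⟨y, hy, hyx⟩ := Submodule.mem_map.mp x.2
        have hxy : Submodule.inclusion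
            (Submodule.map_subtype_le T.domain (S.domain.comap T.toFun)) x = y := by
          apply Subtype.ext
          simpa using hyx.symm
        rw [LinearMap.comp_apply, hxy]
        exact hy)

/-- A measurable functional calculus on a measurable space `X`, with values in
closed partially defined operators on a Hilbert space `H` over `𝕜`. -/
structure MeasFC (X : Type*) [MeasurableSpace X] (𝕜 : Type*) [RCLike 𝕜]
    (H : Type*) [NormedAddCommGroup H] [InnerProductSpace 𝕜 H] [CompleteSpace H] where
  ap : (X → 𝕜) → (H →ₗ.[𝕜] H)
  isClosed : ∀ f : X → 𝕜, Measurable f → (ap f).IsClosed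
  mfc1 : ap (fun _ => 1) = (LinearMap.id : H →ₗ[𝕜] H).toPMap ⊤
  mfc2_add : ∀ f g : X → 𝕜, Measurable f → Measurable g → ap f + ap g ≤ ap (f + g)
  mfc2_smul : ∀ (c : 𝕜) (f : X → 𝕜), Measurable f → c • ap f ≤ ap (fun x => c * f x)
  mfc3_le : ∀ f g : X → 𝕜, Measurable f → Measurable g → (ap f).compP (ap g) ≤ ap (f * g)
  mfc3_dom : ∀ f g : X → 𝕜, Measurable f → Measurable g →
      ((ap f).compP (ap g)).domain = (ap g).domain ⊓ (ap (f * g)).domain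
  mfc4_dom : ∀ f : X → 𝕜, Measurable f → (∃ C, ∀ x, ‖f x‖ ≤ C) → (ap f).domain = ⊤
  mfc4_cont : ∀ f : X → 𝕜, Measurable f → (∃ C, ∀ x, ‖f x‖ ≤ C) →
      Continuous fun x : (ap f).domain => ap f x
  mfc4_star : ∀ f : X → 𝕜, Measurable f → (∃ C, ∀ x, ‖f x‖ ≤ C) →
      (ap f).adjoint = ap (fun x => starRingEnd 𝕜 (f x))
  mfc5 : ∀ (f : ℕ → X → 𝕜) (g : X → 𝕜), (∀ n, Measurable (f n)) → Measurable g →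
      (∃ C, ∀ n x, ‖f n x‖ ≤ C) →
      (∀ x, Filter.Tendsto (fun n => f n x) Filter.atTop (𝓝 (g x))) →
      ∀ (x y : H) (hn : ∀ n, x ∈ (ap (f n)).domain) (hg : x ∈ (ap g).domain),
        Filter.Tendsto (fun n => (inner 𝕜 (ap (f n) ⟨x, hn n⟩) y : 𝕜)) Filter.atTop
          (𝓝 (inner 𝕜 (ap g ⟨x, hg⟩) y))

/-- `B` is a `Φ`-null set: `Φ(𝟏_B) = 0`. -/
def MeasFC.IsNull {X : Type*} [MeasurableSpace X] {𝕜 : Type*} [RCLike 𝕜]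
    {H : Type*} [NormedAddCommGroup H] [InnerProductSpace 𝕜 H] [CompleteSpace H]
    (Φ : MeasFC X 𝕜 H) (B : Set X) : Prop :=
  Φ.ap (B.indicator fun _ => 1) = (0 : H →ₗ[𝕜] H).toPMap ⊤


/-- Iterated composition powers of a partially defined operator. -/
noncomputable def pmPow {𝕜 : Type*} [RCLike 𝕜] {H : Type*} [NormedAddCommGroup H]
    [InnerProductSpace 𝕜 H] (A : H →ₗ.[𝕜] H) : ℕ → (H →ₗ.[𝕜] H)
  | 0 => (LinearMap.id : H →ₗ[𝕜] H).toPMap ⊤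
  | n + 1 => A.compP (pmPow A n)

variable {𝕜 : Type*} [RCLike 𝕜] {X : Type*} [MeasurableSpace X]
  {H : Type*} [NormedAddCommGroup H] [InnerProductSpace 𝕜 H] [CompleteSpace H]

section AuxPMap

variable {R E F : Type*} [Ring R] [AddCommGroup E] [Module R E] [AddCommGroup F] [Module R F]

theorem LinearPMap.mem_compP_domain {E' : Type*} [AddCommGroup E'] [Module R E']
    (S T : E' →ₗ.[R] E') {x : E'} :
    x ∈ (S.compP T).domain ↔ ∃ hx : x ∈ T.domain, T ⟨x, hx⟩ ∈ S.domain := by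
  constructor
  · rintro ⟨y, hy, rfl⟩
    exact ⟨y.2, hy⟩
  · rintro ⟨hx, hTx⟩
    exact ⟨⟨x, hx⟩, hTx, rfl⟩

theorem LinearPMap.compP_apply {E' : Type*} [AddCommGroup E'] [Module R E']
    (S T : E' →ₗ.[R] E') {x : E'} (hx : x ∈ (S.compP T).domain) (hx1 : x ∈ T.domain)
    (hx2 : T ⟨x, hx1⟩ ∈ S.domain) : S.compP T ⟨x, hx⟩ = S ⟨T ⟨x, hx1⟩, hx2⟩ :=
  rfl

theorem LinearPMap.pm_apply_congr {T U : E →ₗ.[R] F} (h : T = U) {y : E} (hy : y ∈ T.domain)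
    (hy' : y ∈ U.domain) : T ⟨y, hy⟩ = U ⟨y, hy'⟩ := by subst h; rfl

theorem LinearPMap.add_le_add' {T₁ T₂ U₁ U₂ : E →ₗ.[R] F} (h₁ : T₁ ≤ U₁) (h₂ : T₂ ≤ U₂) :
    T₁ + T₂ ≤ U₁ + U₂ := by
  refine ⟨fun x hx => ⟨h₁.1 hx.1, h₂.1 hx.2⟩, ?_⟩
  rintro ⟨x, hx⟩ ⟨y, hy⟩ (hxy : x = y)
  have e1 : T₁ ⟨x, hx.1⟩ = U₁ ⟨y, hy.1⟩ := h₁.2 hxy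
  have e2 : T₂ ⟨x, hx.2⟩ = U₂ ⟨y, hy.2⟩ := h₂.2 hxy
  show T₁ ⟨x, hx.1⟩ + T₂ ⟨x, hx.2⟩ = U₁ ⟨y, hy.1⟩ + U₂ ⟨y, hy.2⟩
  rw [e1, e2]

end AuxPMap

section AuxSmul

variable {𝕜 : Type*} [RCLike 𝕜] {H : Type*} [NormedAddCommGroup H] [InnerProductSpace 𝕜 H]

theorem LinearPMap.smul_le_smul' {T U : H →ₗ.[𝕜] H} (c : 𝕜) (h : T ≤ U) : c • T ≤ c • U := by
  refine ⟨h.1, ?_⟩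
  rintro ⟨x, hx⟩ ⟨y, hy⟩ (hxy : x = y)
  have e : T ⟨x, hx⟩ = U ⟨y, hy⟩ := h.2 hxy
  show c • T ⟨x, hx⟩ = c • U ⟨y, hy⟩
  rw [e]

end AuxSmul

namespace MeasFC

variable {𝕜 : Type*} [RCLike 𝕜] {X : Type*} [MeasurableSpace X]
  {H : Type*} [NormedAddCommGroup H] [InnerProductSpace 𝕜 H] [CompleteSpace H]
  (Φ : MeasFC X 𝕜 H)

local notation "⟪" x ", " y "⟫" => @inner 𝕜 _ _ x y

theorem ap_congr {f g : X → 𝕜} (h : ∀ x, f x = g x) : Φ.ap f = Φ.ap g :=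
  congrArg Φ.ap (funext h)

theorem mem_dom_of_bounded {f : X → 𝕜} (hf : Measurable f) (hb : ∃ C, ∀ x, ‖f x‖ ≤ C) (y : H) :
    y ∈ (Φ.ap f).domain := by
  rw [Φ.mfc4_dom f hf hb]; trivial

/-- `Φ.ap f` as an everywhere-defined function, for bounded measurable `f`. -/
noncomputable def bap (f : X → 𝕜) (hf : Measurable f) (hb : ∃ C, ∀ x, ‖f x‖ ≤ C) (y : H) : H :=
  Φ.ap f ⟨y, Φ.mem_dom_of_bounded hf hb y⟩

theorem bap_congr {f g : X → 𝕜} (hf : Measurable f) (hg : Measurable g)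
    (hfb : ∃ C, ∀ x, ‖f x‖ ≤ C) (hgb : ∃ C, ∀ x, ‖g x‖ ≤ C) (h : ∀ x, f x = g x) (y : H) :
    Φ.bap f hf hfb y = Φ.bap g hg hgb y := by
  have h' : f = g := funext h
  subst h'; rfl

theorem bap_one (hf : Measurable (fun _ : X => (1 : 𝕜)))
    (hb : ∃ C, ∀ x : X, ‖(1 : 𝕜)‖ ≤ C) (y : H) : Φ.bap (fun _ => (1 : 𝕜)) hf hb y = y := by
  show Φ.ap (fun _ => (1 : 𝕜)) ⟨y, _⟩ = y
  rw [LinearPMap.pm_apply_congr Φ.mfc1 _ (by trivial)]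
  rfl

theorem bap_mul {f g : X → 𝕜} (hf : Measurable f) (hg : Measurable g)
    (hfb : ∃ C, ∀ x, ‖f x‖ ≤ C) (hgb : ∃ C, ∀ x, ‖g x‖ ≤ C)
    (hm : Measurable fun x => f x * g x) (hmb : ∃ C, ∀ x, ‖f x * g x‖ ≤ C) (y : H) :
    Φ.bap f hf hfb (Φ.bap g hg hgb y) = Φ.bap (fun x => f x * g x) hm hmb y := by
  have hle := Φ.mfc3_le f g hf hg
  have hy : y ∈ ((Φ.ap f).compP (Φ.ap g)).domain :=
    (LinearPMap.mem_compP_domain _ _).mpr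
      ⟨Φ.mem_dom_of_bounded hg hgb y, Φ.mem_dom_of_bounded hf hfb _⟩
  exact hle.2 (x := ⟨y, hy⟩) (y := ⟨y, hle.1 hy⟩) rfl

theorem bap_add {f g : X → 𝕜} (hf : Measurable f) (hg : Measurable g)
    (hfb : ∃ C, ∀ x, ‖f x‖ ≤ C) (hgb : ∃ C, ∀ x, ‖g x‖ ≤ C)
    (hm : Measurable fun x => f x + g x) (hmb : ∃ C, ∀ x, ‖f x + g x‖ ≤ C) (y : H) :
    Φ.bap f hf hfb y + Φ.bap g hg hgb y = Φ.bap (fun x => f x + g x) hm hmb y := by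
  have hle := Φ.mfc2_add f g hf hg
  have hy : y ∈ (Φ.ap f + Φ.ap g).domain :=
    ⟨Φ.mem_dom_of_bounded hf hfb y, Φ.mem_dom_of_bounded hg hgb y⟩
  exact hle.2 (x := ⟨y, hy⟩) (y := ⟨y, hle.1 hy⟩) rfl

theorem inner_bap_conj {f : X → 𝕜} (hf : Measurable f) (hfb : ∃ C, ∀ x, ‖f x‖ ≤ C)
    (hcf : Measurable fun x => starRingEnd 𝕜 (f x))
    (hcfb : ∃ C, ∀ x, ‖starRingEnd 𝕜 (f x)‖ ≤ C) (u v : H) :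
    ⟪Φ.bap (fun x => starRingEnd 𝕜 (f x)) hcf hcfb u, v⟫ = ⟪u, Φ.bap f hf hfb v⟫ := by
  have hd : Dense ((Φ.ap f).domain : Set H) := by
    rw [Φ.mfc4_dom f hf hfb, Submodule.top_coe]
    exact dense_univ
  have hFA := LinearPMap.adjoint_isFormalAdjoint hd
  rw [Φ.mfc4_star f hf hfb] at hFA
  exact hFA ⟨u, Φ.mem_dom_of_bounded hcf hcfb u⟩ ⟨v, Φ.mem_dom_of_bounded hf hfb v⟩

end MeasFC


namespace MeasFC

variable {𝕜 : Type*} [RCLike 𝕜] {X : Type*} [MeasurableSpace X]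
  {H : Type*} [NormedAddCommGroup H] [InnerProductSpace 𝕜 H] [CompleteSpace H]
  (Φ : MeasFC X 𝕜 H)

local notation "⟪" x ", " y "⟫" => @inner 𝕜 _ _ x y

theorem norm_bap_sq {g : X → 𝕜} (hg : Measurable g) (hgb : ∃ C, ∀ x, ‖g x‖ ≤ C)
    (hcg : Measurable fun x => starRingEnd 𝕜 (g x) * g x)
    (hcgb : ∃ C, ∀ x, ‖starRingEnd 𝕜 (g x) * g x‖ ≤ C) (y : H) :
    RCLike.re ⟪Φ.bap (fun x => starRingEnd 𝕜 (g x) * g x) hcg hcgb y, y⟫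
      = ‖Φ.bap g hg hgb y‖ ^ 2 := by
  have hscg : Measurable fun x => starRingEnd 𝕜 (g x) := continuous_star.measurable.comp hg
  have hscgb : ∃ C, ∀ x, ‖starRingEnd 𝕜 (g x)‖ ≤ C := by
    obtain ⟨C, hC⟩ := hgb
    exact ⟨C, fun x => by rw [RCLike.norm_conj]; exact hC x⟩
  have h1 : Φ.bap (fun x => starRingEnd 𝕜 (g x) * g x) hcg hcgb y
      = Φ.bap (fun x => starRingEnd 𝕜 (g x)) hscg hscgb (Φ.bap g hg hgb y) :=
    (Φ.bap_mul hscg hg hscgb hgb hcg hcgb y).symm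
  rw [h1, Φ.inner_bap_conj hg hgb hscg hscgb]
  exact inner_self_eq_norm_sq _

theorem bap_contraction (f : X → 𝕜) (hf : Measurable f) (h1 : ∀ x, ‖f x‖ ≤ 1) (y : H) :
    ‖Φ.bap f hf ⟨1, h1⟩ y‖ ≤ ‖y‖ := by
  set s : X → 𝕜 := fun x => ((Real.sqrt (1 - ‖f x‖ ^ 2) : ℝ) : 𝕜) with hs_def
  have hs : Measurable s :=
    RCLike.measurable_ofReal.comp ((measurable_const.sub (hf.norm.pow_const 2)).sqrt)
  have hsb1 : ∀ x, ‖s x‖ ≤ 1 := fun x => by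
    rw [hs_def, RCLike.norm_ofReal, abs_of_nonneg (Real.sqrt_nonneg _)]
    exact Real.sqrt_le_one.mpr (by nlinarith [h1 x, norm_nonneg (f x)])
  have hcf : Measurable fun x => starRingEnd 𝕜 (f x) * f x :=
    (continuous_star.measurable.comp hf).mul hf
  have hcfb : ∃ C, ∀ x, ‖starRingEnd 𝕜 (f x) * f x‖ ≤ C :=
    ⟨1, fun x => by
      rw [norm_mul, RCLike.norm_conj]
      nlinarith [h1 x, norm_nonneg (f x)]⟩
  have hcs : Measurable fun x => starRingEnd 𝕜 (s x) * s x :=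
    (continuous_star.measurable.comp hs).mul hs
  have hcsb : ∃ C, ∀ x, ‖starRingEnd 𝕜 (s x) * s x‖ ≤ C :=
    ⟨1, fun x => by
      rw [norm_mul, RCLike.norm_conj]
      nlinarith [hsb1 x, norm_nonneg (s x)]⟩
  have hadd : Measurable fun x => starRingEnd 𝕜 (f x) * f x + starRingEnd 𝕜 (s x) * s x :=
    hcf.add hcs
  have haddb : ∃ C, ∀ x, ‖starRingEnd 𝕜 (f x) * f x + starRingEnd 𝕜 (s x) * s x‖ ≤ C := by
    obtain ⟨C₁, hC₁⟩ := hcfb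
    obtain ⟨C₂, hC₂⟩ := hcsb
    exact ⟨C₁ + C₂, fun x => (norm_add_le _ _).trans (add_le_add (hC₁ x) (hC₂ x))⟩
  have hsum : ∀ x, starRingEnd 𝕜 (f x) * f x + starRingEnd 𝕜 (s x) * s x = 1 := fun x => by
    have hle : ‖f x‖ ^ 2 ≤ 1 := by nlinarith [h1 x, norm_nonneg (f x)]
    have hns : ‖s x‖ = Real.sqrt (1 - ‖f x‖ ^ 2) := by
      rw [hs_def, RCLike.norm_ofReal, abs_of_nonneg (Real.sqrt_nonneg _)]
    rw [RCLike.conj_mul, RCLike.conj_mul, hns, ← RCLike.ofReal_pow, ← RCLike.ofReal_pow,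
      Real.sq_sqrt (by linarith), ← RCLike.ofReal_add]
    norm_num
  have hfin : ‖Φ.bap f hf ⟨1, h1⟩ y‖ ^ 2 + ‖Φ.bap s hs ⟨1, hsb1⟩ y‖ ^ 2 = ‖y‖ ^ 2 := by
    rw [← Φ.norm_bap_sq hf ⟨1, h1⟩ hcf hcfb y, ← Φ.norm_bap_sq hs ⟨1, hsb1⟩ hcs hcsb y,
      ← map_add, ← inner_add_left, Φ.bap_add hcf hcs hcfb hcsb hadd haddb y,
      Φ.bap_congr hadd measurable_const haddb ⟨1, fun x => by norm_num⟩ hsum y,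
      Φ.bap_one]
    exact inner_self_eq_norm_sq y
  nlinarith [norm_nonneg (Φ.bap f hf ⟨1, h1⟩ y), norm_nonneg (Φ.bap s hs ⟨1, hsb1⟩ y),
    norm_nonneg y, hfin]

end MeasFC


namespace MeasFC

variable {𝕜 : Type*} [RCLike 𝕜] {X : Type*} [MeasurableSpace X]
  {H : Type*} [NormedAddCommGroup H] [InnerProductSpace 𝕜 H] [CompleteSpace H]
  (Φ : MeasFC X 𝕜 H)

theorem dom_mono {f g : X → 𝕜} (hf : Measurable f) (hg : Measurable g)
    (hle : ∀ x, ‖f x‖ ≤ ‖g x‖) :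
    (Φ.ap g).domain ≤ (Φ.ap f).domain ∧
      ∀ (x : H) (hxg : x ∈ (Φ.ap g).domain) (hxf : x ∈ (Φ.ap f).domain),
        ‖Φ.ap f ⟨x, hxf⟩‖ ≤ ‖Φ.ap g ⟨x, hxg⟩‖ := by
  set h : X → 𝕜 := fun x => if g x = 0 then 0 else f x * (g x)⁻¹ with hh_def
  have hmeas : Measurable h :=
    Measurable.ite (hg (measurableSet_singleton 0)) measurable_const (hf.mul hg.inv)
  have hb1 : ∀ x, ‖h x‖ ≤ 1 := fun x => by
    by_cases hgx : g x = 0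
    · simp [hh_def, hgx]
    · have hpos : 0 < ‖g x‖ := norm_pos_iff.mpr hgx
      simp only [hh_def, if_neg hgx]
      rw [norm_mul, norm_inv, ← div_eq_mul_inv, div_le_one hpos]
      exact hle x
  have hbdd : ∃ C, ∀ x, ‖h x‖ ≤ C := ⟨1, hb1⟩
  have hfg : Φ.ap (h * g) = Φ.ap f := Φ.ap_congr fun x => by
    by_cases hgx : g x = 0
    · have hfx : f x = 0 := norm_le_zero_iff.mp (by simpa [hgx] using hle x)
      simp [Pi.mul_apply, hh_def, hgx, hfx]
    · simp only [Pi.mul_apply, hh_def, if_neg hgx]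
      exact inv_mul_cancel_right₀ hgx (f x)
  have hcomp := Φ.mfc3_le h g hmeas hg
  have hcdom := Φ.mfc3_dom h g hmeas hg
  rw [hfg] at hcomp hcdom
  have hdomeq : ((Φ.ap h).compP (Φ.ap g)).domain = (Φ.ap g).domain := by
    apply le_antisymm
    · intro x hx
      obtain ⟨hx1, _⟩ := (LinearPMap.mem_compP_domain _ _).mp hx
      exact hx1
    · intro x hx
      exact (LinearPMap.mem_compP_domain _ _).mpr ⟨hx, Φ.mem_dom_of_bounded hmeas hbdd _⟩
  constructor
  · intro x hx
    have hx' : x ∈ ((Φ.ap h).compP (Φ.ap g)).domain := by rw [hdomeq]; exact hx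
    rw [hcdom] at hx'
    exact hx'.2
  · intro x hxg hxf
    have hxc : x ∈ ((Φ.ap h).compP (Φ.ap g)).domain := by rw [hdomeq]; exact hxg
    have hval : (Φ.ap h).compP (Φ.ap g) ⟨x, hxc⟩ = Φ.ap f ⟨x, hxf⟩ :=
      hcomp.2 (x := ⟨x, hxc⟩) (y := ⟨x, hxf⟩) rfl
    rw [← hval]
    exact Φ.bap_contraction h hmeas hb1 (Φ.ap g ⟨x, hxg⟩)

end MeasFC


namespace MeasFC

variable {𝕜 : Type*} [RCLike 𝕜] {X : Type*} [MeasurableSpace X]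
  {H : Type*} [NormedAddCommGroup H] [InnerProductSpace 𝕜 H] [CompleteSpace H]
  (Φ : MeasFC X 𝕜 H)

theorem dom_smul' {f : X → 𝕜} (hf : Measurable f) {c : 𝕜} (hc : c ≠ 0) :
    (Φ.ap fun x => c * f x).domain = (Φ.ap f).domain := by
  apply le_antisymm
  · have h2 := Φ.mfc2_smul c⁻¹ (fun x => c * f x) (measurable_const.mul hf)
    have h3 : Φ.ap (fun x => c⁻¹ * (c * f x)) = Φ.ap f :=
      Φ.ap_congr fun x => inv_mul_cancel_left₀ hc (f x)
    rw [h3] at h2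
    exact h2.1
  · exact (Φ.mfc2_smul c f hf).1

theorem dom_le_dom_add {b u : X → 𝕜} (hb : Measurable b) (hu : Measurable u)
    (hbb : ∃ C, ∀ x, ‖b x‖ ≤ C) :
    (Φ.ap u).domain ≤ (Φ.ap fun x => b x + u x).domain := by
  have h := Φ.mfc2_add b u hb hu
  intro x hx
  exact h.1 ⟨Φ.mem_dom_of_bounded hb hbb x, hx⟩

theorem dom_bounded_add {b u : X → 𝕜} (hb : Measurable b) (hu : Measurable u)
    (hbb : ∃ C, ∀ x, ‖b x‖ ≤ C) :
    (Φ.ap fun x => b x + u x).domain = (Φ.ap u).domain := by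
  apply le_antisymm
  · have h := Φ.dom_le_dom_add (hb.neg) (hb.add hu)
      (by obtain ⟨C, hC⟩ := hbb; exact ⟨C, fun x => by simpa using hC x⟩)
    have h3 : Φ.ap (fun x => (-b) x + (b + u) x) = Φ.ap u :=
      Φ.ap_congr fun x => by simp only [Pi.neg_apply, Pi.add_apply]; ring
    rw [h3] at h
    exact h
  · exact Φ.dom_le_dom_add hb hu hbb

theorem dom_norm_eq {u : X → 𝕜} (hu : Measurable u) :
    (Φ.ap fun x => ((‖u x‖ : ℝ) : 𝕜)).domain = (Φ.ap u).domain := by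
  have hm : Measurable fun x => ((‖u x‖ : ℝ) : 𝕜) := RCLike.measurable_ofReal.comp hu.norm
  have h1 : ∀ x, ‖((‖u x‖ : ℝ) : 𝕜)‖ = ‖u x‖ := fun x => by
    rw [RCLike.norm_ofReal, abs_norm]
  apply le_antisymm
  · exact (Φ.dom_mono hu hm (fun x => (h1 x).symm.le)).1
  · exact (Φ.dom_mono hm hu (fun x => (h1 x).le)).1

theorem dom_le_of_growth {u w : X → 𝕜} (hu : Measurable u) (hw : Measurable w) {C : ℝ}
    (hC : 0 < C) (h : ∀ x, ‖u x‖ ≤ C * (1 + ‖w x‖)) :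
    (Φ.ap w).domain ≤ (Φ.ap u).domain := by
  set v : X → 𝕜 := fun x => ((C * (1 + ‖w x‖) : ℝ) : 𝕜) with hv_def
  have hv : Measurable v :=
    RCLike.measurable_ofReal.comp (measurable_const.mul (measurable_const.add hw.norm))
  have hnv : ∀ x, ‖v x‖ = C * (1 + ‖w x‖) := fun x => by
    rw [hv_def, RCLike.norm_ofReal, abs_of_nonneg (by positivity)]
  have hdomv : (Φ.ap v).domain = (Φ.ap w).domain := by
    have e1 : Φ.ap v = Φ.ap fun x => ((C : ℝ) : 𝕜) * (((1 + ‖w x‖ : ℝ)) : 𝕜) :=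
      Φ.ap_congr fun x => by simp only [hv_def]; push_cast; ring
    have e2 : (Φ.ap fun x => (((1 + ‖w x‖ : ℝ)) : 𝕜)).domain
        = (Φ.ap fun x => ((‖w x‖ : ℝ) : 𝕜)).domain := by
      have e3 : Φ.ap (fun x => (((1 + ‖w x‖ : ℝ)) : 𝕜))
          = Φ.ap fun x => (1 : 𝕜) + ((‖w x‖ : ℝ) : 𝕜) := Φ.ap_congr fun x => by push_cast; ring
      rw [e3]
      exact Φ.dom_bounded_add measurable_const (RCLike.measurable_ofReal.comp hw.norm)
        ⟨1, fun x => by norm_num⟩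
    rw [e1, Φ.dom_smul' (f := fun x => (((1 + ‖w x‖ : ℝ)) : 𝕜))
      (RCLike.measurable_ofReal.comp (measurable_const.add hw.norm))
      (RCLike.ofReal_ne_zero.mpr hC.ne'), e2, Φ.dom_norm_eq hw]
  rw [← hdomv]
  exact (Φ.dom_mono hu hv fun x => (h x).trans (hnv x).symm.le).1

end MeasFC


section Growth

variable {𝕜 : Type*} [RCLike 𝕜]

theorem poly_growth_upper (n : ℕ) (a : ℕ → 𝕜) :
    ∃ C : ℝ, 0 < C ∧ ∀ z : 𝕜,
      ‖∑ j ∈ Finset.range (n + 1), a j * z ^ j‖ ≤ C * (1 + ‖z‖ ^ n) := by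
  have hA0 : 0 ≤ ∑ j ∈ Finset.range (n + 1), ‖a j‖ :=
    Finset.sum_nonneg fun j _ => norm_nonneg _
  refine ⟨(∑ j ∈ Finset.range (n + 1), ‖a j‖) + 1, by positivity, fun z => ?_⟩
  have h1 : ∀ j ∈ Finset.range (n + 1), ‖a j * z ^ j‖ ≤ ‖a j‖ * (1 + ‖z‖ ^ n) := by
    intro j hj
    rw [norm_mul, norm_pow]
    apply mul_le_mul_of_nonneg_left _ (norm_nonneg _)
    by_cases hz : ‖z‖ ≤ 1
    · have h2 : ‖z‖ ^ j ≤ 1 := pow_le_one₀ (norm_nonneg z) hz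
      nlinarith [pow_nonneg (norm_nonneg z) n]
    · push_neg at hz
      have hj' : j ≤ n := by
        have := Finset.mem_range.mp hj; omega
      have h2 : ‖z‖ ^ j ≤ ‖z‖ ^ n := pow_le_pow_right₀ hz.le hj'
      linarith
  calc ‖∑ j ∈ Finset.range (n + 1), a j * z ^ j‖
      ≤ ∑ j ∈ Finset.range (n + 1), ‖a j * z ^ j‖ := norm_sum_le _ _
    _ ≤ ∑ j ∈ Finset.range (n + 1), ‖a j‖ * (1 + ‖z‖ ^ n) := Finset.sum_le_sum h1
    _ = (∑ j ∈ Finset.range (n + 1), ‖a j‖) * (1 + ‖z‖ ^ n) := (Finset.sum_mul _ _ _).symm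
    _ ≤ ((∑ j ∈ Finset.range (n + 1), ‖a j‖) + 1) * (1 + ‖z‖ ^ n) := by
        nlinarith [pow_nonneg (norm_nonneg z) n]

theorem poly_growth_lower (n : ℕ) (a : ℕ → 𝕜) (hn : 1 ≤ n) (ha : a n ≠ 0) :
    ∃ C : ℝ, 0 < C ∧ ∀ z : 𝕜,
      ‖z‖ ^ n ≤ C * (1 + ‖∑ j ∈ Finset.range (n + 1), a j * z ^ j‖) := by
  set A : ℝ := ∑ j ∈ Finset.range n, ‖a j‖ with hA_def
  have hA0 : 0 ≤ A := Finset.sum_nonneg fun j _ => norm_nonneg _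
  have han : 0 < ‖a n‖ := norm_pos_iff.mpr ha
  set R : ℝ := max 1 (2 * A / ‖a n‖) with hR_def
  have hR1 : (1 : ℝ) ≤ R := le_max_left _ _
  have hRpos : (0 : ℝ) < R := by linarith
  refine ⟨max (R ^ n) (2 / ‖a n‖),
    lt_of_lt_of_le (pow_pos hRpos n) (le_max_left _ _), fun z => ?_⟩
  set P : 𝕜 := ∑ j ∈ Finset.range (n + 1), a j * z ^ j with hP_def
  have hP0 : (0 : ℝ) ≤ ‖P‖ := norm_nonneg _
  by_cases hz : ‖z‖ ≤ R
  · have h1 : ‖z‖ ^ n ≤ R ^ n := pow_le_pow_left₀ (norm_nonneg z) hz n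
    have h2 : R ^ n ≤ max (R ^ n) (2 / ‖a n‖) := le_max_left _ _
    nlinarith [mul_nonneg (le_of_lt (lt_of_lt_of_le (pow_pos hRpos n) h2)) hP0]
  · push_neg at hz
    have hz1 : (1 : ℝ) ≤ ‖z‖ := hR1.trans hz.le
    have htail : ‖∑ j ∈ Finset.range n, a j * z ^ j‖ ≤ A * ‖z‖ ^ (n - 1) := by
      calc ‖∑ j ∈ Finset.range n, a j * z ^ j‖
          ≤ ∑ j ∈ Finset.range n, ‖a j * z ^ j‖ := norm_sum_le _ _
        _ ≤ ∑ j ∈ Finset.range n, ‖a j‖ * ‖z‖ ^ (n - 1) := by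
            apply Finset.sum_le_sum
            intro j hj
            rw [norm_mul, norm_pow]
            exact mul_le_mul_of_nonneg_left
              (pow_le_pow_right₀ hz1 (by have := Finset.mem_range.mp hj; omega))
              (norm_nonneg _)
        _ = A * ‖z‖ ^ (n - 1) := (Finset.sum_mul _ _ _).symm
    have hzn : ‖z‖ ^ n = ‖z‖ ^ (n - 1) * ‖z‖ := by
      conv_lhs => rw [show n = (n - 1) + 1 by omega]
      rw [pow_succ]
    have hpow0 : (0 : ℝ) ≤ ‖z‖ ^ (n - 1) := pow_nonneg (norm_nonneg z) _
    have hA2 : A * ‖z‖ ^ (n - 1) ≤ ‖a n‖ / 2 * ‖z‖ ^ n := by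
      rw [hzn]
      have hz2A : 2 * A / ‖a n‖ ≤ ‖z‖ := (le_max_right _ _).trans hz.le
      rw [div_le_iff₀ han] at hz2A
      nlinarith
    have hsplit : P = (∑ j ∈ Finset.range n, a j * z ^ j) + a n * z ^ n :=
      Finset.sum_range_succ _ n
    have hmain : ‖a n‖ / 2 * ‖z‖ ^ n ≤ ‖P‖ := by
      have h4 : ‖a n * z ^ n‖ ≤ ‖P‖ + ‖∑ j ∈ Finset.range n, a j * z ^ j‖ := by
        calc ‖a n * z ^ n‖
            = ‖P - ∑ j ∈ Finset.range n, a j * z ^ j‖ := by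
              rw [hsplit]; congr 1; ring
          _ ≤ ‖P‖ + ‖∑ j ∈ Finset.range n, a j * z ^ j‖ := norm_sub_le _ _
      rw [norm_mul, norm_pow] at h4
      nlinarith
    have h5 : ‖z‖ ^ n ≤ 2 / ‖a n‖ * ‖P‖ := by
      have h6 : ‖z‖ ^ n = 2 / ‖a n‖ * (‖a n‖ / 2 * ‖z‖ ^ n) := by
        field_simp
      rw [h6]
      exact mul_le_mul_of_nonneg_left hmain (by positivity)
    have hC2 : 2 / ‖a n‖ ≤ max (R ^ n) (2 / ‖a n‖) := le_max_right _ _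
    nlinarith [div_pos two_pos han,
      mul_le_mul_of_nonneg_right hC2 (by linarith : (0 : ℝ) ≤ 1 + ‖P‖)]

end Growth


theorem pmPow_domain_antitone {𝕜 : Type*} [RCLike 𝕜] {H : Type*} [NormedAddCommGroup H]
    [InnerProductSpace 𝕜 H] (A : H →ₗ.[𝕜] H) (n : ℕ) :
    (pmPow A (n + 1)).domain ≤ (pmPow A n).domain := by
  intro x hx
  obtain ⟨hx1, _⟩ := (LinearPMap.mem_compP_domain _ _).mp hx
  exact hx1

namespace MeasFC

variable {𝕜 : Type*} [RCLike 𝕜] {X : Type*} [MeasurableSpace X]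
  {H : Type*} [NormedAddCommGroup H] [InnerProductSpace 𝕜 H] [CompleteSpace H]
  (Φ : MeasFC X 𝕜 H)

theorem dom_pow_succ_le {f : X → 𝕜} (hf : Measurable f) (n : ℕ) :
    (Φ.ap fun x => f x ^ (n + 1)).domain ≤ (Φ.ap fun x => f x ^ n).domain := by
  apply Φ.dom_le_of_growth (hf.pow_const n) (hf.pow_const (n + 1)) one_pos
  intro x
  rw [norm_pow, norm_pow]
  by_cases hz : ‖f x‖ ≤ 1
  · have : ‖f x‖ ^ n ≤ 1 := pow_le_one₀ (norm_nonneg _) hz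
    nlinarith [pow_nonneg (norm_nonneg (f x)) (n + 1)]
  · push_neg at hz
    have : ‖f x‖ ^ n ≤ ‖f x‖ ^ (n + 1) := pow_le_pow_right₀ hz.le (by omega)
    linarith

theorem pmPow_eq {f : X → 𝕜} (hf : Measurable f) (n : ℕ) :
    pmPow (Φ.ap f) n ≤ Φ.ap (fun x => f x ^ n) ∧
      (pmPow (Φ.ap f) n).domain = (Φ.ap fun x => f x ^ n).domain := by
  induction n with
  | zero =>
    have h0 : Φ.ap (fun x => f x ^ 0) = Φ.ap (fun _ => (1 : 𝕜)) :=
      Φ.ap_congr fun x => pow_zero _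
    rw [h0, Φ.mfc1]
    exact ⟨le_refl _, rfl⟩
  | succ n ih =>
    obtain ⟨ihle, ihdom⟩ := ih
    have hfn : Measurable fun x => f x ^ n := hf.pow_const n
    have hmul := Φ.mfc3_le f (fun x => f x ^ n) hf hfn
    have hdom := Φ.mfc3_dom f (fun x => f x ^ n) hf hfn
    have hfg : Φ.ap (f * fun x => f x ^ n) = Φ.ap (fun x => f x ^ (n + 1)) :=
      Φ.ap_congr fun x => (pow_succ' (f x) n).symm
    rw [hfg] at hmul hdom
    -- describe membership in the domain of `pmPow (n+1)`
    have hmem : ∀ x : H, x ∈ (pmPow (Φ.ap f) (n + 1)).domain ↔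
        x ∈ (pmPow (Φ.ap f) n).domain ⊓ (Φ.ap fun x => f x ^ (n + 1)).domain := by
      intro x
      constructor
      · intro hx
        obtain ⟨hx1, hx2⟩ := (LinearPMap.mem_compP_domain _ _).mp hx
        have hx1' : x ∈ (Φ.ap fun x => f x ^ n).domain := ihle.1 hx1
        have hval : pmPow (Φ.ap f) n ⟨x, hx1⟩ = Φ.ap (fun x => f x ^ n) ⟨x, hx1'⟩ :=
          ihle.2 rfl
        have hxc : x ∈ ((Φ.ap f).compP (Φ.ap fun x => f x ^ n)).domain :=
          (LinearPMap.mem_compP_domain _ _).mpr ⟨hx1', hval ▸ hx2⟩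
        rw [hdom] at hxc
        exact ⟨hx1, hxc.2⟩
      · rintro ⟨hx1, hx2⟩
        have hx1' : x ∈ (Φ.ap fun x => f x ^ n).domain := ihle.1 hx1
        have hval : pmPow (Φ.ap f) n ⟨x, hx1⟩ = Φ.ap (fun x => f x ^ n) ⟨x, hx1'⟩ :=
          ihle.2 rfl
        have hxc : x ∈ ((Φ.ap f).compP (Φ.ap fun x => f x ^ n)).domain := by
          rw [hdom]; exact ⟨hx1', hx2⟩
        obtain ⟨hc1, hc2⟩ := (LinearPMap.mem_compP_domain _ _).mp hxc
        refine (LinearPMap.mem_compP_domain _ _).mpr ⟨hx1, ?_⟩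
        rw [hval]
        exact hc2
    constructor
    · refine ⟨fun x hx => ((hmem x).mp hx).2, ?_⟩
      rintro ⟨x, hx⟩ ⟨y, hy⟩ (hxy : x = y)
      subst hxy
      obtain ⟨hx1, hx2⟩ := (LinearPMap.mem_compP_domain _ _).mp hx
      have hx1' : x ∈ (Φ.ap fun x => f x ^ n).domain := ihle.1 hx1
      have hval : pmPow (Φ.ap f) n ⟨x, hx1⟩ = Φ.ap (fun x => f x ^ n) ⟨x, hx1'⟩ :=
        ihle.2 rfl
      have hx2' : Φ.ap (fun x => f x ^ n) ⟨x, hx1'⟩ ∈ (Φ.ap f).domain := hval ▸ hx2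
      have hxc : x ∈ ((Φ.ap f).compP (Φ.ap fun x => f x ^ n)).domain :=
        (LinearPMap.mem_compP_domain _ _).mpr ⟨hx1', hx2'⟩
      calc pmPow (Φ.ap f) (n + 1) ⟨x, hx⟩
          = Φ.ap f ⟨pmPow (Φ.ap f) n ⟨x, hx1⟩, hx2⟩ := rfl
        _ = Φ.ap f ⟨Φ.ap (fun x => f x ^ n) ⟨x, hx1'⟩, hx2'⟩ := by
            congr 1
            exact Subtype.ext hval
        _ = (Φ.ap f).compP (Φ.ap fun x => f x ^ n) ⟨x, hxc⟩ := rfl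
        _ = Φ.ap (fun x => f x ^ (n + 1)) ⟨x, hy⟩ := hmul.2 rfl
    · apply le_antisymm
      · intro x hx
        exact ((hmem x).mp hx).2
      · intro x hx
        refine (hmem x).mpr ⟨?_, hx⟩
        rw [ihdom]
        exact Φ.dom_pow_succ_le hf n hx

theorem sum_pmPow_eq {f : X → 𝕜} (hf : Measurable f) (n : ℕ) (a : ℕ → 𝕜) :
    (∑ j ∈ Finset.range (n + 1), a j • pmPow (Φ.ap f) j)
        ≤ Φ.ap (fun x => ∑ j ∈ Finset.range (n + 1), a j * f x ^ j) ∧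
      (∑ j ∈ Finset.range (n + 1), a j • pmPow (Φ.ap f) j).domain
        = (pmPow (Φ.ap f) n).domain := by
  induction n with
  | zero =>
    rw [Finset.sum_range_one]
    constructor
    · have h0 : pmPow (Φ.ap f) 0 = Φ.ap (fun _ => (1 : 𝕜)) := Φ.mfc1.symm
      rw [h0]
      have h1 := Φ.mfc2_smul (a 0) (fun _ => (1 : 𝕜)) measurable_const
      have h2 : Φ.ap (fun _ => a 0 * 1) =
          Φ.ap fun x => ∑ j ∈ Finset.range (0 + 1), a j * f x ^ j :=
        Φ.ap_congr fun x => by rw [Finset.sum_range_one, pow_zero]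
      rw [h2] at h1
      exact h1
    · rfl
  | succ n ih =>
    obtain ⟨ihle, ihdom⟩ := ih
    have hsum_meas : Measurable fun x => ∑ j ∈ Finset.range (n + 1), a j * f x ^ j :=
      Finset.measurable_sum _ fun j _ => measurable_const.mul (hf.pow_const j)
    have hterm_meas : Measurable fun x => a (n + 1) * f x ^ (n + 1) :=
      measurable_const.mul (hf.pow_const (n + 1))
    have hle2 : a (n + 1) • pmPow (Φ.ap f) (n + 1)
        ≤ Φ.ap fun x => a (n + 1) * f x ^ (n + 1) :=
      le_trans (LinearPMap.smul_le_smul' (a (n + 1)) (Φ.pmPow_eq hf (n + 1)).1)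
        (Φ.mfc2_smul (a (n + 1)) _ (hf.pow_const (n + 1)))
    constructor
    · rw [Finset.sum_range_succ]
      have hadd := Φ.mfc2_add _ _ hsum_meas hterm_meas
      have hcongr : Φ.ap ((fun x => ∑ j ∈ Finset.range (n + 1), a j * f x ^ j)
            + fun x => a (n + 1) * f x ^ (n + 1))
          = Φ.ap fun x => ∑ j ∈ Finset.range (n + 2), a j * f x ^ j :=
        Φ.ap_congr fun x => (Finset.sum_range_succ (fun j => a j * f x ^ j) (n + 1)).symm
      rw [hcongr] at hadd
      exact le_trans (LinearPMap.add_le_add' ihle hle2) hadd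
    · rw [Finset.sum_range_succ]
      show ((∑ j ∈ Finset.range (n + 1), a j • pmPow (Φ.ap f) j).domain
          ⊓ (a (n + 1) • pmPow (Φ.ap f) (n + 1)).domain) = _
      rw [LinearPMap.smul_domain, ihdom]
      exact inf_eq_right.mpr (pmPow_domain_antitone (Φ.ap f) n)

end MeasFC


/-- Corollary 2.3 (a), (c): domination and polynomials. -/
theorem mfc_domination_and_polynomials (Φ : MeasFC X 𝕜 H) (f : X → 𝕜) (hf : Measurable f) :
    -- (a) if |f| ≤ |g| pointwise then dom Φ(g) ⊆ dom Φ(f) and ‖Φ(f)x‖ ≤ ‖Φ(g)x‖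
    (∀ g : X → 𝕜, Measurable g → (∀ x, ‖f x‖ ≤ ‖g x‖) →
      (Φ.ap g).domain ≤ (Φ.ap f).domain ∧
      ∀ (x : H) (hxg : x ∈ (Φ.ap g).domain) (hxf : x ∈ (Φ.ap f).domain),
        ‖Φ.ap f ⟨x, hxf⟩‖ ≤ ‖Φ.ap g ⟨x, hxg⟩‖) ∧
    -- (c) for a polynomial p(z) = ∑_{j=0}^n a_j z^j of degree n ≥ 1,
    --     Φ(p ∘ f) = ∑_{j=0}^n a_j Φ(f)^j and dom Φ(p ∘ f) = dom (Φ(f)^n)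
    (∀ (n : ℕ) (a : ℕ → 𝕜), 1 ≤ n → a n ≠ 0 →
      Φ.ap (fun x => ∑ j ∈ Finset.range (n + 1), a j * f x ^ j) =
        ∑ j ∈ Finset.range (n + 1), a j • pmPow (Φ.ap f) j ∧
      (Φ.ap (fun x => ∑ j ∈ Finset.range (n + 1), a j * f x ^ j)).domain =
        (pmPow (Φ.ap f) n).domain) := by
  constructor
  · intro g hg hle
    exact Φ.dom_mono hf hg hle
  · intro n a hn ha
    have hp_meas : Measurable fun x => ∑ j ∈ Finset.range (n + 1), a j * f x ^ j :=
      Finset.measurable_sum _ fun j _ => measurable_const.mul (hf.pow_const j)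
    have hfn : Measurable fun x => f x ^ n := hf.pow_const n
    obtain ⟨C₁, hC₁0, hC₁⟩ := poly_growth_lower (𝕜 := 𝕜) n a hn ha
    obtain ⟨C₂, hC₂0, hC₂⟩ := poly_growth_upper (𝕜 := 𝕜) n a
    have h1 : (Φ.ap fun x => ∑ j ∈ Finset.range (n + 1), a j * f x ^ j).domain
        = (Φ.ap fun x => f x ^ n).domain := by
      apply le_antisymm
      · refine Φ.dom_le_of_growth hfn hp_meas hC₁0 fun x => ?_
        rw [norm_pow]
        exact hC₁ (f x)
      · refine Φ.dom_le_of_growth hp_meas hfn hC₂0 fun x => ?_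
        rw [norm_pow]
        exact hC₂ (f x)
    have h2 := Φ.pmPow_eq hf n
    have h3 := Φ.sum_pmPow_eq hf n a
    have hdomeq : (∑ j ∈ Finset.range (n + 1), a j • pmPow (Φ.ap f) j).domain
        = (Φ.ap fun x => ∑ j ∈ Finset.range (n + 1), a j * f x ^ j).domain :=
      h3.2.trans (h2.2.trans h1.symm)
    have heq := LinearPMap.eq_of_le_of_domain_eq h3.1 hdomeq
    exact ⟨heq.symm, h1.trans h2.2.symm⟩

end
end

section
/- Let Φ be a measurable functional calculus on (X, Σ) and let f : X → 𝕜 be measurable. Then the spectrum of Φ(f) equals its approximate point spectrum, and both equal the Φ-essential range of f: σ(Φ(f)) = σ_ap(Φ(f)) = essran_Φ(f). -/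
open scoped Topology

noncomputable section

namespace LinearPMap

variable {R E : Type*} [Ring R] [AddCommGroup E] [Module R E] {S T : E →ₗ.[R] E}

theorem compP_mem {x : E} (hx : x ∈ T.domain) (hx2 : T ⟨x, hx⟩ ∈ S.domain) :
    x ∈ (S.compP T).domain :=
  Submodule.mem_map.mpr ⟨⟨x, hx⟩, hx2, rfl⟩

theorem compP_mem' {x : E} (h : x ∈ (S.compP T).domain) :
    ∃ hx : x ∈ T.domain, T ⟨x, hx⟩ ∈ S.domain := by
  obtain ⟨y, hy, hyx⟩ := Submodule.mem_map.mp h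
  refine ⟨hyx ▸ y.2, ?_⟩
  have : (⟨x, hyx ▸ y.2⟩ : T.domain) = y := Subtype.ext hyx.symm
  rw [this]
  exact hy

theorem compP_apply_s5 {x : E} (h : x ∈ (S.compP T).domain) (hx : x ∈ T.domain)
    (hx2 : T ⟨x, hx⟩ ∈ S.domain) :
    S.compP T ⟨x, h⟩ = S ⟨T ⟨x, hx⟩, hx2⟩ := by
  show S.toFun _ = S.toFun _
  congr 1

theorem eq_apply {A B : E →ₗ.[R] E} (hAB : A = B) {x : E} (hA : x ∈ A.domain)
    (hB : x ∈ B.domain) : A ⟨x, hA⟩ = B ⟨x, hB⟩ := by subst hAB; rfl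

theorem le_apply {A B : E →ₗ.[R] E} (hAB : A ≤ B) {x : E} (hA : x ∈ A.domain)
    (hB : x ∈ B.domain) : A ⟨x, hA⟩ = B ⟨x, hB⟩ := hAB.2 rfl

end LinearPMap

section MFCLemmas

namespace MeasFC

variable {X : Type*} [MeasurableSpace X] {𝕜 : Type*} [RCLike 𝕜]
  {H : Type*} [NormedAddCommGroup H] [InnerProductSpace 𝕜 H] [CompleteSpace H]
  (Φ : MeasFC X 𝕜 H)

set_option linter.unusedSectionVars false

local notation "⟪" x ", " y "⟫" => @inner 𝕜 _ _ x y

theorem mem_dom {g : X → 𝕜} (hg : Measurable g) (hb : ∃ C, ∀ x, ‖g x‖ ≤ C) (x : H) :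
    x ∈ (Φ.ap g).domain := (Φ.mfc4_dom g hg hb).ge trivial

theorem one_apply {x : H} (h : x ∈ (Φ.ap fun _ => 1).domain) : Φ.ap (fun _ => 1) ⟨x, h⟩ = x :=
  (LinearPMap.eq_apply Φ.mfc1 h trivial).trans (LinearMap.toPMap_apply _ _ _)

theorem add_apply₃ {a b : X → 𝕜} (ha : Measurable a) (hb : Measurable b) {x : H}
    (hxa : x ∈ (Φ.ap a).domain) (hxb : x ∈ (Φ.ap b).domain)
    (hxab : x ∈ (Φ.ap (a + b)).domain) :
    Φ.ap (a + b) ⟨x, hxab⟩ = Φ.ap a ⟨x, hxa⟩ + Φ.ap b ⟨x, hxb⟩ := by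
  have hle := Φ.mfc2_add a b ha hb
  have hmem : x ∈ (Φ.ap a + Φ.ap b).domain := Submodule.mem_inf.mpr ⟨hxa, hxb⟩
  rw [← LinearPMap.le_apply hle hmem hxab]
  exact LinearPMap.add_apply _ _ _

theorem smul_apply₂ (c : 𝕜) {a : X → 𝕜} (ha : Measurable a) {x : H}
    (hxa : x ∈ (Φ.ap a).domain) (hxca : x ∈ (Φ.ap fun y => c * a y).domain) :
    Φ.ap (fun y => c * a y) ⟨x, hxca⟩ = c • Φ.ap a ⟨x, hxa⟩ := by
  have hle := Φ.mfc2_smul c a ha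
  have hmem : x ∈ (c • Φ.ap a).domain := hxa
  rw [← LinearPMap.le_apply hle hmem hxca]
  exact LinearPMap.smul_apply _ _ _

theorem smul_dom_le (c : 𝕜) {a : X → 𝕜} (ha : Measurable a) :
    (Φ.ap a).domain ≤ (Φ.ap fun y => c * a y).domain := (Φ.mfc2_smul c a ha).1

theorem const_dom (c : 𝕜) : (Φ.ap fun _ => c).domain = ⊤ :=
  Φ.mfc4_dom _ measurable_const ⟨‖c‖, fun _ => le_rfl⟩

theorem const_apply (c : 𝕜) {x : H} (h : x ∈ (Φ.ap fun _ => c).domain) :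
    Φ.ap (fun _ => c) ⟨x, h⟩ = c • x := by
  have hle := Φ.mfc2_smul c (fun _ => 1) measurable_const
  have h1 : x ∈ (Φ.ap fun _ : X => 1).domain := Φ.mem_dom measurable_const ⟨1, by simp⟩ x
  have hfun : (fun y : X => c * (fun _ : X => (1:𝕜)) y) = fun _ => c := by
    funext y; simp
  have hmem : x ∈ (c • Φ.ap (fun _ : X => 1)).domain := h1
  have h2 : x ∈ (Φ.ap fun y : X => c * (fun _ : X => (1:𝕜)) y).domain := by rw [hfun]; exact h
  calc Φ.ap (fun _ => c) ⟨x, h⟩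
      = Φ.ap (fun y : X => c * (fun _ : X => (1:𝕜)) y) ⟨x, h2⟩ :=
        (LinearPMap.eq_apply (by rw [hfun]) h2 h).symm
    _ = c • Φ.ap (fun _ : X => 1) ⟨x, h1⟩ := Φ.smul_apply₂ c measurable_const h1 h2
    _ = c • x := by rw [Φ.one_apply]

theorem mul_apply₂ {a b : X → 𝕜} (ha : Measurable a) (hb : Measurable b) {x : H}
    (hxb : x ∈ (Φ.ap b).domain) (hxab : x ∈ (Φ.ap (a * b)).domain) :
    ∃ h2 : Φ.ap b ⟨x, hxb⟩ ∈ (Φ.ap a).domain,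
      Φ.ap (a * b) ⟨x, hxab⟩ = Φ.ap a ⟨Φ.ap b ⟨x, hxb⟩, h2⟩ := by
  have hc : x ∈ ((Φ.ap a).compP (Φ.ap b)).domain := by
    rw [Φ.mfc3_dom a b ha hb]; exact Submodule.mem_inf.mpr ⟨hxb, hxab⟩
  obtain ⟨hx', h2⟩ := LinearPMap.compP_mem' hc
  refine ⟨h2, ?_⟩
  rw [← LinearPMap.le_apply (Φ.mfc3_le a b ha hb) hc hxab]
  exact LinearPMap.compP_apply_s5 hc hxb h2

theorem neg_dom_le {a : X → 𝕜} (ha : Measurable a) :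
    (Φ.ap a).domain ≤ (Φ.ap fun y => -a y).domain := by
  have := Φ.smul_dom_le (-1) ha
  simpa only [neg_one_mul] using this

theorem sub_dom_le (μ : 𝕜) {a : X → 𝕜} (ha : Measurable a) :
    (Φ.ap a).domain ≤ (Φ.ap fun y => μ - a y).domain := by
  intro x hx
  have hna : Measurable fun y => -a y := ha.neg
  have hxna : x ∈ (Φ.ap fun y => -a y).domain := Φ.neg_dom_le ha hx
  have hle := Φ.mfc2_add (fun _ => μ) (fun y => -a y) measurable_const hna
  have hfun : ((fun _ : X => μ) + fun y => -a y) = fun y => μ - a y := by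
    funext y; simp [sub_eq_add_neg]
  have hmem : x ∈ (Φ.ap (fun _ : X => μ) + Φ.ap fun y => -a y).domain :=
    Submodule.mem_inf.mpr ⟨(Φ.const_dom μ).ge trivial, hxna⟩
  have := hle.1 hmem
  rwa [hfun] at this

theorem sub_apply₂ (μ : 𝕜) {a : X → 𝕜} (ha : Measurable a) {x : H}
    (hxa : x ∈ (Φ.ap a).domain) (hxm : x ∈ (Φ.ap fun y => μ - a y).domain) :
    Φ.ap (fun y => μ - a y) ⟨x, hxm⟩ = μ • x - Φ.ap a ⟨x, hxa⟩ := by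
  have hna : Measurable fun y => -a y := ha.neg
  have hxna : x ∈ (Φ.ap fun y => -a y).domain := Φ.neg_dom_le ha hxa
  have hfun : ((fun _ : X => μ) + fun y => -a y) = fun y => μ - a y := by
    funext y; simp [sub_eq_add_neg]
  have hxc : x ∈ (Φ.ap fun _ : X => μ).domain := (Φ.const_dom μ).ge trivial
  have hxs : x ∈ (Φ.ap ((fun _ : X => μ) + fun y => -a y)).domain := by rw [hfun]; exact hxm
  have e1 : Φ.ap (fun y => μ - a y) ⟨x, hxm⟩
      = Φ.ap ((fun _ : X => μ) + fun y => -a y) ⟨x, hxs⟩ :=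
    (LinearPMap.eq_apply (by rw [hfun]) hxs hxm).symm
  rw [e1, Φ.add_apply₃ measurable_const hna hxc hxna hxs, Φ.const_apply μ hxc]
  have hfun2 : (fun y : X => -a y) = fun y => (-1 : 𝕜) * a y := by funext y; rw [neg_one_mul]
  have hxna2 : x ∈ (Φ.ap fun y => (-1 : 𝕜) * a y).domain := by rw [← hfun2]; exact hxna
  have e2 : Φ.ap (fun y => -a y) ⟨x, hxna⟩ = Φ.ap (fun y => (-1:𝕜) * a y) ⟨x, hxna2⟩ :=
    LinearPMap.eq_apply (by rw [hfun2]) hxna hxna2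
  rw [e2, Φ.smul_apply₂ (-1) ha hxa hxna2]
  module

theorem dom_sub_sub (μ : 𝕜) {a : X → 𝕜} (ha : Measurable a) :
    (Φ.ap fun y => μ - a y).domain ≤ (Φ.ap a).domain := by
  have h := Φ.sub_dom_le μ (ha.const_sub μ)
  have hfun : (fun y => μ - (μ - a y)) = a := by funext y; ring
  rwa [hfun] at h

theorem dense_dom {g : X → 𝕜} (hg : Measurable g) (hb : ∃ C, ∀ x, ‖g x‖ ≤ C) :
    Dense ((Φ.ap g).domain : Set H) := by
  rw [Φ.mfc4_dom g hg hb]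
  simp only [Submodule.top_coe]
  exact dense_univ

theorem formal_adjoint {g : X → 𝕜} (hg : Measurable g) (hb : ∃ C, ∀ x, ‖g x‖ ≤ C) {x z : H}
    (hz : z ∈ (Φ.ap fun y => starRingEnd 𝕜 (g y)).domain) (hx : x ∈ (Φ.ap g).domain) :
    ⟪Φ.ap (fun y => starRingEnd 𝕜 (g y)) ⟨z, hz⟩, x⟫ = ⟪z, Φ.ap g ⟨x, hx⟩⟫ := by
  have key := LinearPMap.adjoint_isFormalAdjoint (T := Φ.ap g) (Φ.dense_dom hg hb)
  have hstar := Φ.mfc4_star g hg hb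
  have hz' : z ∈ (Φ.ap g).adjoint.domain := by rw [hstar]; exact hz
  have e : (Φ.ap g).adjoint ⟨z, hz'⟩ = Φ.ap (fun y => starRingEnd 𝕜 (g y)) ⟨z, hz⟩ :=
    LinearPMap.eq_apply hstar hz' hz
  rw [← e]
  exact key ⟨z, hz'⟩ ⟨x, hx⟩

theorem conj_mul_inner {g : X → 𝕜} (hg : Measurable g) (hb : ∃ C, ∀ x, ‖g x‖ ≤ C) {x : H}
    (hx : x ∈ (Φ.ap g).domain)
    (hxgg : x ∈ (Φ.ap fun y => starRingEnd 𝕜 (g y) * g y).domain) :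
    ⟪Φ.ap (fun y => starRingEnd 𝕜 (g y) * g y) ⟨x, hxgg⟩, x⟫
      = (‖Φ.ap g ⟨x, hx⟩‖ : 𝕜) ^ 2 := by
  have hconj : Measurable fun y => starRingEnd 𝕜 (g y) :=
    (RCLike.continuous_conj.measurable).comp hg
  have hfun : ((fun y => starRingEnd 𝕜 (g y)) * g) = fun y => starRingEnd 𝕜 (g y) * g y := rfl
  have hxgg' : x ∈ (Φ.ap ((fun y => starRingEnd 𝕜 (g y)) * g)).domain := by
    rw [hfun]; exact hxgg
  obtain ⟨h2, he⟩ := Φ.mul_apply₂ hconj hg hx hxgg'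
  have e0 : Φ.ap (fun y => starRingEnd 𝕜 (g y) * g y) ⟨x, hxgg⟩
      = Φ.ap ((fun y => starRingEnd 𝕜 (g y)) * g) ⟨x, hxgg'⟩ :=
    LinearPMap.eq_apply (by rw [hfun]) hxgg hxgg'
  rw [e0, he, Φ.formal_adjoint hg hb h2 hx]
  exact inner_self_eq_norm_sq_to_K _

theorem norm_apply_le {g : X → 𝕜} (hg : Measurable g) {C : ℝ} (hC : 0 ≤ C)
    (hb : ∀ y, ‖g y‖ ≤ C) {x : H} (hx : x ∈ (Φ.ap g).domain) :
    ‖Φ.ap g ⟨x, hx⟩‖ ≤ C * ‖x‖ := by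
  set h : X → 𝕜 := fun y => ((Real.sqrt (C ^ 2 - ‖g y‖ ^ 2) : ℝ) : 𝕜) with hh_def
  have hnonneg : ∀ y, (0:ℝ) ≤ C ^ 2 - ‖g y‖ ^ 2 := fun y => by
    have := hb y
    nlinarith [norm_nonneg (g y)]
  have hh : Measurable h :=
    RCLike.continuous_ofReal.measurable.comp
      ((measurable_const.sub (hg.norm.pow_const 2)).sqrt)
  have hhb : ∀ y, ‖h y‖ ≤ C := fun y => by
    rw [hh_def]
    simp only [RCLike.norm_ofReal, abs_of_nonneg (Real.sqrt_nonneg _)]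
    calc Real.sqrt (C ^ 2 - ‖g y‖ ^ 2) ≤ Real.sqrt (C ^ 2) :=
          Real.sqrt_le_sqrt (by nlinarith [norm_nonneg (g y)])
      _ = C := Real.sqrt_sq hC
  have hgb : ∃ C', ∀ y, ‖g y‖ ≤ C' := ⟨C, hb⟩
  have hhbb : ∃ C', ∀ y, ‖h y‖ ≤ C' := ⟨C, hhb⟩
  have hgg_meas : Measurable fun y => starRingEnd 𝕜 (g y) * g y :=
    ((RCLike.continuous_conj.measurable).comp hg).mul hg
  have hhh_meas : Measurable fun y => starRingEnd 𝕜 (h y) * h y :=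
    ((RCLike.continuous_conj.measurable).comp hh).mul hh
  have hgg_b : ∃ C', ∀ y, ‖starRingEnd 𝕜 (g y) * g y‖ ≤ C' :=
    ⟨C ^ 2, fun y => by
      rw [norm_mul, RCLike.norm_conj, ← sq]
      exact pow_le_pow_left₀ (norm_nonneg _) (hb y) 2⟩
  have hhh_b : ∃ C', ∀ y, ‖starRingEnd 𝕜 (h y) * h y‖ ≤ C' :=
    ⟨C ^ 2, fun y => by
      rw [norm_mul, RCLike.norm_conj, ← sq]
      exact pow_le_pow_left₀ (norm_nonneg _) (hhb y) 2⟩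
  have hsum : ((fun y => starRingEnd 𝕜 (g y) * g y) + fun y => starRingEnd 𝕜 (h y) * h y)
      = fun _ => ((C ^ 2 : ℝ) : 𝕜) := by
    funext y
    have hnh : ‖h y‖ = Real.sqrt (C ^ 2 - ‖g y‖ ^ 2) := by
      simp [hh_def, RCLike.norm_ofReal, abs_of_nonneg (Real.sqrt_nonneg _)]
    have hs : Real.sqrt (C ^ 2 - ‖g y‖ ^ 2) ^ 2 = C ^ 2 - ‖g y‖ ^ 2 := Real.sq_sqrt (hnonneg y)
    rw [Pi.add_apply, RCLike.conj_mul, RCLike.conj_mul, hnh]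
    norm_cast
    rw [hs]
    ring
  have hxg : x ∈ (Φ.ap g).domain := hx
  have hxh : x ∈ (Φ.ap h).domain := Φ.mem_dom hh hhbb x
  have hxgg : x ∈ (Φ.ap fun y => starRingEnd 𝕜 (g y) * g y).domain :=
    Φ.mem_dom hgg_meas hgg_b x
  have hxhh : x ∈ (Φ.ap fun y => starRingEnd 𝕜 (h y) * h y).domain :=
    Φ.mem_dom hhh_meas hhh_b x
  have hxsum : x ∈ (Φ.ap (((fun y => starRingEnd 𝕜 (g y) * g y)
      + fun y => starRingEnd 𝕜 (h y) * h y))).domain := by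
    rw [hsum]; exact (Φ.const_dom _).ge trivial
  have hxc : x ∈ (Φ.ap fun _ : X => ((C ^ 2 : ℝ) : 𝕜)).domain := (Φ.const_dom _).ge trivial
  have eadd := Φ.add_apply₃ hgg_meas hhh_meas hxgg hxhh hxsum
  have econst : Φ.ap (((fun y => starRingEnd 𝕜 (g y) * g y)
      + fun y => starRingEnd 𝕜 (h y) * h y)) ⟨x, hxsum⟩ = ((C ^ 2 : ℝ) : 𝕜) • x := by
    rw [LinearPMap.eq_apply (congrArg Φ.ap hsum) hxsum hxc]
    exact Φ.const_apply _ hxc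
  have key : (‖Φ.ap g ⟨x, hx⟩‖ : 𝕜) ^ 2 + (‖Φ.ap h ⟨x, hxh⟩‖ : 𝕜) ^ 2
      = ((C ^ 2 : ℝ) : 𝕜) * (‖x‖ : 𝕜) ^ 2 := by
    have := congrArg (fun z => ⟪z, x⟫) (econst.symm.trans eadd)
    simp only [inner_add_left, inner_smul_left] at this
    rw [Φ.conj_mul_inner hg hgb hx hxgg, Φ.conj_mul_inner hh hhbb hxh hxhh,
      inner_self_eq_norm_sq_to_K, RCLike.conj_ofReal] at this
    exact this.symm
  have keyR : ‖Φ.ap g ⟨x, hx⟩‖ ^ 2 + ‖Φ.ap h ⟨x, hxh⟩‖ ^ 2 = C ^ 2 * ‖x‖ ^ 2 := by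
    exact_mod_cast key
  nlinarith [norm_nonneg (Φ.ap g ⟨x, hx⟩), norm_nonneg (Φ.ap h ⟨x, hxh⟩), norm_nonneg x,
    mul_nonneg hC (norm_nonneg x)]

theorem ind_meas {B : Set X} (hB : MeasurableSet B) :
    Measurable (B.indicator fun _ => (1 : 𝕜)) := measurable_const.indicator hB

theorem ind_bdd (B : Set X) : ∀ y, ‖B.indicator (fun _ => (1 : 𝕜)) y‖ ≤ 1 := fun y => by
  by_cases h : y ∈ B <;> simp [Set.indicator_apply, h]

theorem ind_dom {B : Set X} (hB : MeasurableSet B) {x : H} :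
    x ∈ (Φ.ap (B.indicator fun _ => (1 : 𝕜))).domain :=
  Φ.mem_dom (ind_meas hB) ⟨1, ind_bdd B⟩ x

theorem ind_mul_self (B : Set X) :
    ((B.indicator fun _ => (1 : 𝕜)) * (B.indicator fun _ => (1 : 𝕜)))
      = B.indicator fun _ => (1 : 𝕜) := by
  funext y
  by_cases h : y ∈ B <;> simp [Set.indicator_apply, h]

theorem ind_proj {B : Set X} (hB : MeasurableSet B) {x : H}
    (hx : x ∈ (Φ.ap (B.indicator fun _ => (1 : 𝕜))).domain)
    (h2 : Φ.ap (B.indicator fun _ => (1 : 𝕜)) ⟨x, hx⟩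
      ∈ (Φ.ap (B.indicator fun _ => (1 : 𝕜))).domain) :
    Φ.ap (B.indicator fun _ => (1 : 𝕜)) ⟨Φ.ap (B.indicator fun _ => (1 : 𝕜)) ⟨x, hx⟩, h2⟩
      = Φ.ap (B.indicator fun _ => (1 : 𝕜)) ⟨x, hx⟩ := by
  have hxm : x ∈ (Φ.ap ((B.indicator fun _ => (1 : 𝕜))
      * (B.indicator fun _ => (1 : 𝕜)))).domain := by
    rw [ind_mul_self]; exact hx
  obtain ⟨h2', he⟩ := Φ.mul_apply₂ (ind_meas hB) (ind_meas hB) hx hxm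
  have e0 : Φ.ap ((B.indicator fun _ => (1 : 𝕜)) * (B.indicator fun _ => (1 : 𝕜))) ⟨x, hxm⟩
      = Φ.ap (B.indicator fun _ => (1 : 𝕜)) ⟨x, hx⟩ :=
    LinearPMap.eq_apply (congrArg Φ.ap (ind_mul_self B)) hxm hx
  exact he.symm.trans e0

theorem null_apply {B : Set X} (hnull : Φ.IsNull B) {x : H}
    (hx : x ∈ (Φ.ap (B.indicator fun _ => (1 : 𝕜))).domain) :
    Φ.ap (B.indicator fun _ => (1 : 𝕜)) ⟨x, hx⟩ = 0 := by
  have := LinearPMap.eq_apply hnull hx (B := (0 : H →ₗ[𝕜] H).toPMap ⊤) Submodule.mem_top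
  rw [this]
  rfl

theorem compl_apply {B : Set X} (hB : MeasurableSet B) (hnull : Φ.IsNull B) {x : H}
    (hx : x ∈ (Φ.ap (Bᶜ.indicator fun _ => (1 : 𝕜))).domain) :
    Φ.ap (Bᶜ.indicator fun _ => (1 : 𝕜)) ⟨x, hx⟩ = x := by
  have hfun : ((B.indicator fun _ => (1 : 𝕜)) + (Bᶜ.indicator fun _ => (1 : 𝕜)))
      = fun _ => (1 : 𝕜) := by
    funext y
    by_cases h : y ∈ B <;> simp [Set.indicator_apply, h]
  have hxB : x ∈ (Φ.ap (B.indicator fun _ => (1 : 𝕜))).domain := Φ.ind_dom hB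
  have hxs : x ∈ (Φ.ap ((B.indicator fun _ => (1 : 𝕜))
      + (Bᶜ.indicator fun _ => (1 : 𝕜)))).domain := by
    rw [hfun]; exact Φ.mem_dom measurable_const ⟨1, by simp⟩ x
  have hx1 : x ∈ (Φ.ap fun _ : X => (1 : 𝕜)).domain := by
    have := hxs; rwa [hfun] at this
  have e1 : Φ.ap ((B.indicator fun _ => (1 : 𝕜)) + (Bᶜ.indicator fun _ => (1 : 𝕜))) ⟨x, hxs⟩
      = x := by
    rw [LinearPMap.eq_apply (congrArg Φ.ap hfun) hxs hx1]
    exact Φ.one_apply hx1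
  rw [Φ.add_apply₃ (ind_meas hB) (ind_meas hB.compl) hxB hx hxs,
    Φ.null_apply hnull hxB, zero_add] at e1
  exact e1

theorem not_null_exists {B : Set X} (hB : MeasurableSet B) (h : ¬ Φ.IsNull B) :
    ∃ (y : H) (hy : y ∈ (Φ.ap (B.indicator fun _ => (1 : 𝕜))).domain),
      Φ.ap (B.indicator fun _ => (1 : 𝕜)) ⟨y, hy⟩ ≠ 0 := by
  by_contra hc
  push_neg at hc
  apply h
  refine LinearPMap.ext ?_ ?_
  · rw [Φ.mfc4_dom _ (ind_meas hB) ⟨1, ind_bdd B⟩, LinearMap.toPMap_domain]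
  · intro u hu _
    rw [hc u hu]
    rfl

end MeasFC

end MFCLemmas

variable {𝕜 : Type*} [RCLike 𝕜]
variable {H : Type*} [NormedAddCommGroup H] [InnerProductSpace 𝕜 H] [CompleteSpace H]

/-- The spectrum of a partially defined operator `A`: `μ ∉ σ(A)` iff `μ - A` is a bijection
from `dom A` onto `H` with bounded (everywhere-defined continuous) inverse. -/
def pmSpectrum (A : H →ₗ.[𝕜] H) : Set 𝕜 :=
  {μ | ¬ ∃ R : H →L[𝕜] H,
      (∀ x : A.domain, R (μ • (x : H) - A x) = x) ∧
      (∀ y : H, ∃ h : R y ∈ A.domain, μ • R y - A ⟨R y, h⟩ = y)}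

/-- The approximate point spectrum: there is a sequence of unit vectors `x n ∈ dom A` with
`‖(μ - A) x n‖ → 0`. -/
def pmApSpectrum (A : H →ₗ.[𝕜] H) : Set 𝕜 :=
  {μ | ∃ x : ℕ → A.domain, (∀ n, ‖(x n : H)‖ = 1) ∧
      Filter.Tendsto (fun n => ‖μ • (x n : H) - A (x n)‖) Filter.atTop (𝓝 0)}

/-- The `Φ`-essential range of `f`. -/
def MeasFC.essRan {X : Type*} [MeasurableSpace X] (Φ : MeasFC X 𝕜 H) (f : X → 𝕜) : Set 𝕜 :=
  {μ | ∀ ε : ℝ, 0 < ε → ¬ Φ.IsNull {x | ‖f x - μ‖ ≤ ε}}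

section Claims

variable {X : Type*} [MeasurableSpace X] (Φ : MeasFC X 𝕜 H) {f : X → 𝕜}

theorem essRan_subset_ap (hf : Measurable f) : Φ.essRan f ⊆ pmApSpectrum (Φ.ap f) := by
  intro μ hμ
  have key : ∀ n : ℕ, ∃ u : (Φ.ap f).domain, ‖(u : H)‖ = 1 ∧
      ‖μ • (u : H) - Φ.ap f u‖ ≤ 1 / (n + 1) := by
    intro n
    set ε : ℝ := 1 / (n + 1) with hε_def
    have hε : 0 < ε := by positivity
    set B : Set X := {x | ‖f x - μ‖ ≤ ε} with hB_def
    have hB : MeasurableSet B := measurableSet_le (hf.sub measurable_const).norm measurable_const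
    obtain ⟨y, hy, hv0⟩ := Φ.not_null_exists hB (hμ ε hε)
    set v : H := Φ.ap (B.indicator fun _ => 1) ⟨y, hy⟩ with hv_def
    set m : X → 𝕜 := fun x => μ - f x with hm_def
    have hm : Measurable m := measurable_const.sub hf
    have hmi_bdd : ∀ x, ‖(m * (B.indicator fun _ => 1) : X → 𝕜) x‖ ≤ ε := by
      intro x
      by_cases hxB : x ∈ B
      · have : ‖f x - μ‖ ≤ ε := hxB
        simp only [Pi.mul_apply, Set.indicator_of_mem hxB, mul_one, hm_def]
        rwa [norm_sub_rev]
      · simp only [Pi.mul_apply, Set.indicator_of_notMem hxB, mul_zero, norm_zero]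
        exact hε.le
    have hvi : v ∈ (Φ.ap (B.indicator fun _ => 1)).domain := Φ.ind_dom hB
    have hvmi : v ∈ (Φ.ap (m * (B.indicator fun _ => 1))).domain :=
      Φ.mem_dom (hm.mul (MeasFC.ind_meas hB)) ⟨ε, hmi_bdd⟩ v
    obtain ⟨h2, he⟩ := Φ.mul_apply₂ hm (MeasFC.ind_meas hB) hvi hvmi
    have hproj : Φ.ap (B.indicator fun _ => 1) ⟨v, hvi⟩ = v := Φ.ind_proj hB hy hvi
    have h2' : v ∈ (Φ.ap m).domain := by rw [hproj] at h2; exact h2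
    have e2 : Φ.ap m ⟨Φ.ap (B.indicator fun _ => 1) ⟨v, hvi⟩, h2⟩ = Φ.ap m ⟨v, h2'⟩ :=
      congrArg (fun z : (Φ.ap m).domain => Φ.ap m z) (Subtype.ext hproj)
    have hnorm : ‖Φ.ap m ⟨v, h2'⟩‖ ≤ ε * ‖v‖ := by
      rw [← e2, ← he]
      exact Φ.norm_apply_le (hm.mul (MeasFC.ind_meas hB)) hε.le hmi_bdd hvmi
    have hdf : v ∈ (Φ.ap f).domain := Φ.dom_sub_sub μ hf h2'
    have hvne : v ≠ 0 := hv0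
    set c : 𝕜 := ((‖v‖ : ℝ) : 𝕜)⁻¹ with hc_def
    have hnc : ‖c‖ = ‖v‖⁻¹ := by
      rw [hc_def, norm_inv, RCLike.norm_ofReal, abs_of_nonneg (norm_nonneg v)]
    have hcu : ‖c • v‖ = 1 := by
      rw [norm_smul, hnc, inv_mul_cancel₀ (norm_ne_zero_iff.mpr hvne)]
    refine ⟨⟨c • v, Submodule.smul_mem _ c hdf⟩, hcu, ?_⟩
    have hcm : c • v ∈ (Φ.ap m).domain := Submodule.smul_mem _ c h2'
    have hsub := Φ.sub_apply₂ μ hf (Submodule.smul_mem _ c hdf) hcm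
    have esmul : Φ.ap m ⟨c • v, hcm⟩ = c • Φ.ap m ⟨v, h2'⟩ := by
      have : (⟨c • v, hcm⟩ : (Φ.ap m).domain) = c • ⟨v, h2'⟩ := rfl
      rw [this, LinearPMap.map_smul]
    calc ‖μ • (c • v) - Φ.ap f ⟨c • v, Submodule.smul_mem _ c hdf⟩‖
        = ‖Φ.ap m ⟨c • v, hcm⟩‖ := by rw [hsub]
      _ = ‖c‖ * ‖Φ.ap m ⟨v, h2'⟩‖ := by rw [esmul, norm_smul]
      _ ≤ ‖v‖⁻¹ * (ε * ‖v‖) := by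
          rw [hnc]
          exact mul_le_mul_of_nonneg_left hnorm (inv_nonneg.mpr (norm_nonneg v))
      _ = ε := by field_simp [norm_ne_zero_iff.mpr hvne]
  choose u hu1 hu2 using key
  refine ⟨u, hu1, ?_⟩
  exact squeeze_zero (fun n => norm_nonneg _) hu2 tendsto_one_div_add_atTop_nhds_zero_nat

theorem ap_subset_spectrum (A : H →ₗ.[𝕜] H) : pmApSpectrum A ⊆ pmSpectrum A := by
  rintro μ ⟨x, hx1, hx2⟩ ⟨R, hR1, _⟩
  have hge : ∀ n, 1 ≤ ‖R‖ * ‖μ • (x n : H) - A (x n)‖ := fun n => by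
    calc (1 : ℝ) = ‖(x n : H)‖ := (hx1 n).symm
      _ = ‖R (μ • (x n : H) - A (x n))‖ := by rw [hR1 (x n)]
      _ ≤ ‖R‖ * ‖μ • (x n : H) - A (x n)‖ := R.le_opNorm _
  have h0 : Filter.Tendsto (fun n => ‖R‖ * ‖μ • (x n : H) - A (x n)‖)
      Filter.atTop (𝓝 (‖R‖ * 0)) := hx2.const_mul ‖R‖
  rw [mul_zero] at h0
  obtain ⟨n, hn⟩ := (h0.eventually_lt_const zero_lt_one).exists
  linarith [hge n]

theorem spectrum_subset_essRan (hf : Measurable f) :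
    pmSpectrum (Φ.ap f) ⊆ Φ.essRan f := by
  intro μ hμ
  by_contra hess
  apply hμ
  simp only [MeasFC.essRan, Set.mem_setOf_eq, not_forall] at hess
  obtain ⟨ε, hε, hnull⟩ := hess
  rw [not_not] at hnull
  set B : Set X := {x | ‖f x - μ‖ ≤ ε} with hB_def
  have hB : MeasurableSet B := measurableSet_le (hf.sub measurable_const).norm measurable_const
  set m : X → 𝕜 := fun x => μ - f x with hm_def
  have hm : Measurable m := measurable_const.sub hf
  set g : X → 𝕜 := fun x => if ‖f x - μ‖ ≤ ε then 0 else (μ - f x)⁻¹ with hg_def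
  have hg : Measurable g :=
    Measurable.ite hB measurable_const (measurable_const.sub hf).inv
  have hgb : ∀ x, ‖g x‖ ≤ ε⁻¹ := by
    intro x
    rw [hg_def]
    by_cases h : ‖f x - μ‖ ≤ ε
    · simp only [if_pos h, norm_zero]
      positivity
    · push_neg at h
      simp only [if_neg (not_le.mpr h), norm_inv]
      rw [norm_sub_rev]
      exact inv_anti₀ hε h.le
  have hne : ∀ x, x ∉ B → μ - f x ≠ 0 := by
    intro x hx h0
    have h : ε < ‖f x - μ‖ := not_le.mp hx
    have hfx : f x - μ = 0 := by rw [← neg_sub μ (f x), h0, neg_zero]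
    rw [hfx, norm_zero] at h
    linarith
  have hgm : g * m = Bᶜ.indicator fun _ => (1 : 𝕜) := by
    funext x
    by_cases h : x ∈ B
    · have hle : ‖f x - μ‖ ≤ ε := h
      simp [hg_def, Pi.mul_apply, if_pos hle, Set.indicator_apply, h]
    · have hle : ¬ ‖f x - μ‖ ≤ ε := h
      simp only [Pi.mul_apply, hg_def, if_neg hle, hm_def, Set.indicator_apply,
        Set.mem_compl_iff, h, not_false_iff, if_pos]
      exact inv_mul_cancel₀ (hne x h)
  have hmg : m * g = Bᶜ.indicator fun _ => (1 : 𝕜) := by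
    rw [mul_comm]; exact hgm
  have hd : ∀ z : H, z ∈ (Φ.ap g).domain := Φ.mem_dom hg ⟨ε⁻¹, hgb⟩
  set L : H →ₗ[𝕜] H :=
    { toFun := fun z => Φ.ap g ⟨z, hd z⟩
      map_add' := fun z w => by
        show Φ.ap g ⟨z + w, hd (z + w)⟩ = Φ.ap g ⟨z, hd z⟩ + Φ.ap g ⟨w, hd w⟩
        have : (⟨z + w, hd (z + w)⟩ : (Φ.ap g).domain) = ⟨z, hd z⟩ + ⟨w, hd w⟩ := rfl
        rw [this, LinearPMap.map_add]
      map_smul' := fun c z => by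
        show Φ.ap g ⟨c • z, hd (c • z)⟩ = c • Φ.ap g ⟨z, hd z⟩
        have : (⟨c • z, hd (c • z)⟩ : (Φ.ap g).domain) = c • ⟨z, hd z⟩ := rfl
        rw [this, LinearPMap.map_smul] } with hL_def
  have hL : ∀ z, ‖L z‖ ≤ ε⁻¹ * ‖z‖ := fun z =>
    Φ.norm_apply_le hg (inv_nonneg.mpr hε.le) hgb (hd z)
  set R : H →L[𝕜] H := L.mkContinuous ε⁻¹ hL with hR_def
  have hRapp : ∀ z, R z = Φ.ap g ⟨z, hd z⟩ := fun z => rfl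
  refine ⟨R, ?_, ?_⟩
  · intro x
    have hxm : (x : H) ∈ (Φ.ap m).domain := Φ.sub_dom_le μ hf x.2
    have hsub : Φ.ap m ⟨(x : H), hxm⟩ = μ • (x : H) - Φ.ap f x := by
      have := Φ.sub_apply₂ μ hf x.2 hxm
      simpa using this
    rw [← hsub, hRapp]
    have hxgm : (x : H) ∈ (Φ.ap (g * m)).domain := by
      rw [hgm]; exact Φ.ind_dom hB.compl
    obtain ⟨h2, he⟩ := Φ.mul_apply₂ hg hm hxm hxgm
    have hxind : (x : H) ∈ (Φ.ap (Bᶜ.indicator fun _ => (1 : 𝕜))).domain := Φ.ind_dom hB.compl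
    have egm : Φ.ap (g * m) ⟨(x : H), hxgm⟩ = (x : H) := by
      rw [LinearPMap.eq_apply (congrArg Φ.ap hgm) hxgm hxind]
      exact Φ.compl_apply hB hnull hxind
    exact he.symm.trans egm
  · intro y
    have hymg : y ∈ (Φ.ap (m * g)).domain := by
      rw [hmg]; exact Φ.ind_dom hB.compl
    obtain ⟨h2, he⟩ := Φ.mul_apply₂ hm hg (hd y) hymg
    have hyind : y ∈ (Φ.ap (Bᶜ.indicator fun _ => (1 : 𝕜))).domain := Φ.ind_dom hB.compl
    have emg : Φ.ap (m * g) ⟨y, hymg⟩ = y := by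
      rw [LinearPMap.eq_apply (congrArg Φ.ap hmg) hymg hyind]
      exact Φ.compl_apply hB hnull hyind
    have hRy : R y ∈ (Φ.ap f).domain := Φ.dom_sub_sub μ hf h2
    refine ⟨hRy, ?_⟩
    have hsub := Φ.sub_apply₂ μ hf hRy h2
    rw [← hsub]
    exact he.symm.trans emg

end Claims

/-- Theorem 4.1 (a): `σ(Φ(f)) = σ_ap(Φ(f)) = essran_Φ(f)`. -/
theorem mfc_spectrum_eq_essential_range {X : Type*} [MeasurableSpace X]
    (Φ : MeasFC X 𝕜 H) (f : X → 𝕜) (hf : Measurable f) :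
    pmSpectrum (Φ.ap f) = pmApSpectrum (Φ.ap f) ∧
    pmSpectrum (Φ.ap f) = Φ.essRan f := by
  have hEA := essRan_subset_ap Φ hf
  have hAS := ap_subset_spectrum (Φ.ap f)
  have hSE := spectrum_subset_essRan Φ hf
  constructor
  · exact Set.Subset.antisymm (fun μ h => hEA (hSE h)) hAS
  · exact Set.Subset.antisymm hSE (fun μ h => hAS (hEA h))


end
end
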